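/- Let W be an integrable function on [0,1]², and for each n let P_n be the partition of [0,1] into n consecutive intervals of length 1/n. Then W_{P_n} → W almost everywhere as n → ∞, where W_{P_n} is the block-average of W over the grid P_n × P_n. -/

import Mathlib

open MeasureTheory Filter Metric

lemma prod_Icc_ae_eq_Ico (a b c d : ℝ) :
    (Set.Icc a b ×ˢ Set.Icc c d : Set (ℝ×ℝ)) =ᵐ[volume] (Set.Ico a b ×ˢ Set.Ico c d) := by
  have h1 : volume ({z : ℝ × ℝ | z.1 = b} ∪ {z : ℝ × ℝ | z.2 = d}) = 0 := by
    apply measure_union_null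
    · have : {z : ℝ × ℝ | z.1 = b} = ({b} : Set ℝ) ×ˢ (Set.univ : Set ℝ) := by
        ext z
        constructor
        · intro h; exact ⟨h, trivial⟩
        · intro h; exact h.1
      rw [this, Measure.volume_eq_prod, Measure.prod_prod]
      simp
    · have : {z : ℝ × ℝ | z.2 = d} = (Set.univ : Set ℝ) ×ˢ ({d} : Set ℝ) := by
        ext z
        constructor
        · intro h; exact ⟨trivial, h⟩
        · intro h; exact h.2
      rw [this, Measure.volume_eq_prod, Measure.prod_prod]
      simp
  rw [MeasureTheory.ae_eq_set]
  constructor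
  · apply measure_mono_null _ h1
    rintro ⟨x, y⟩ ⟨⟨⟨hx1, hx2⟩, hy1, hy2⟩, hne⟩
    simp only [Set.mem_prod, Set.mem_Ico, not_and_or, not_and, not_lt] at hne
    rcases hne with h | h
    · rcases h with h | h
      · exact absurd hx1 h
      · exact Or.inl (le_antisymm hx2 h)
    · rcases h with h | h
      · exact absurd hy1 h
      · exact Or.inr (le_antisymm hy2 h)
  · have : (Set.Ico a b ×ˢ Set.Ico c d : Set (ℝ×ℝ)) \ (Set.Icc a b ×ˢ Set.Icc c d) = ∅ := by
      rw [Set.diff_eq_empty]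
      exact Set.prod_mono Set.Ico_subset_Icc_self Set.Ico_subset_Icc_self
    rw [this]; simp

lemma floor_block_aux {t : ℝ} (ht0 : 0 ≤ t) (ht1 : t < 1) {n : ℕ} (hn : 1 ≤ n) :
    0 ≤ (⌊(n:ℝ)*t⌋:ℝ) ∧ ((⌊(n:ℝ)*t⌋:ℝ)+1) ≤ (n:ℝ) ∧
    (⌊(n:ℝ)*t⌋:ℝ)/(n:ℝ) ≤ t ∧ t < ((⌊(n:ℝ)*t⌋:ℝ)+1)/(n:ℝ) := by
  have hn' : (0:ℝ) < n := by exact_mod_cast Nat.pos_of_ne_zero (by omega)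
  have h0 : (0:ℝ) ≤ (n:ℝ) * t := by positivity
  have hf0 : (0:ℤ) ≤ ⌊(n:ℝ)*t⌋ := Int.floor_nonneg.2 h0
  have hlt : ⌊(n:ℝ)*t⌋ < (n:ℤ) := by
    rw [Int.floor_lt]
    push_cast
    nlinarith
  refine ⟨by exact_mod_cast hf0, by exact_mod_cast hlt, ?_, ?_⟩
  · rw [div_le_iff₀ hn', mul_comm]
    exact Int.floor_le _
  · rw [lt_div_iff₀ hn', mul_comm t]
    exact Int.lt_floor_add_one _

/-- Average of `W` over the grid block of side `1/n` containing `z`. -/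
noncomputable def gridAvg (n : ℕ) (W : ℝ × ℝ → ℝ) (z : ℝ × ℝ) : ℝ :=
  (n : ℝ)^2 *
    ∫ p in (Set.Ico ((⌊(n : ℝ) * z.1⌋ : ℝ) / n) ((⌊(n : ℝ) * z.1⌋ + 1 : ℝ) / n)) ×ˢ
             (Set.Ico ((⌊(n : ℝ) * z.2⌋ : ℝ) / n) ((⌊(n : ℝ) * z.2⌋ + 1 : ℝ) / n)), W p

/-- Almost-everywhere convergence of grid block averages to `W`. -/
theorem stmt7 (W : ℝ × ℝ → ℝ)
    (hW : IntegrableOn W (Set.Icc (0:ℝ) 1 ×ˢ Set.Icc (0:ℝ) 1)) :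
    ∀ᵐ z ∂(volume.restrict (Set.Icc (0:ℝ) 1 ×ˢ Set.Icc (0:ℝ) 1)),
      Tendsto (fun n : ℕ => gridAvg n W z) atTop (nhds (W z)) := by
  have hQ : MeasurableSet (Set.Icc (0:ℝ) 1 ×ˢ Set.Icc (0:ℝ) 1) :=
    measurableSet_Icc.prod measurableSet_Icc
  have hW'int : Integrable ((Set.Icc (0:ℝ) 1 ×ˢ Set.Icc (0:ℝ) 1).indicator W) :=
    (integrable_indicator_iff hQ).2 hW
  have hloc : LocallyIntegrable ((Set.Icc (0:ℝ) 1 ×ˢ Set.Icc (0:ℝ) 1).indicator W) volume :=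
    hW'int.locallyIntegrable
  have key := IsUnifLocDoublingMeasure.ae_tendsto_average (μ := (volume : Measure (ℝ×ℝ))) hloc 1
  have hone : ∀ᵐ z : ℝ×ℝ ∂volume, z.1 ≠ 1 ∧ z.2 ≠ 1 := by
    rw [eventually_and]
    constructor
    · rw [ae_iff]
      apply measure_mono_null (t := ({(1:ℝ)} : Set ℝ) ×ˢ (Set.univ : Set ℝ))
      · intro z hz
        simp only [Set.mem_setOf_eq, not_not] at hz
        exact ⟨hz, trivial⟩
      · rw [Measure.volume_eq_prod, Measure.prod_prod]; simp
    · rw [ae_iff]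
      apply measure_mono_null (t := (Set.univ : Set ℝ) ×ˢ ({(1:ℝ)} : Set ℝ))
      · intro z hz
        simp only [Set.mem_setOf_eq, not_not] at hz
        exact ⟨trivial, hz⟩
      · rw [Measure.volume_eq_prod, Measure.prod_prod]; simp
  filter_upwards [ae_restrict_of_ae key, ae_restrict_of_ae hone, ae_restrict_mem hQ]
    with z hz hz1 hzQ
  have hx0 : 0 ≤ z.1 := hzQ.1.1
  have hx1 : z.1 < 1 := lt_of_le_of_ne hzQ.1.2 hz1.1
  have hy0 : 0 ≤ z.2 := hzQ.2.1
  have hy1 : z.2 < 1 := lt_of_le_of_ne hzQ.2.2 hz1.2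
  have hδlim : Tendsto (fun n : ℕ => 1/(2*(n:ℝ))) atTop (nhdsWithin 0 (Set.Ioi 0)) := by
    apply tendsto_nhdsWithin_of_tendsto_nhds_of_eventually_within
    · have h2 : Tendsto (fun n : ℕ => 2*(n:ℝ)) atTop atTop :=
        (tendsto_natCast_atTop_atTop).const_mul_atTop two_pos
      have h3 : Tendsto (fun n : ℕ => (2*(n:ℝ))⁻¹) atTop (nhds 0) := h2.inv_tendsto_atTop
      simpa only [one_div] using h3
    · filter_upwards [eventually_ge_atTop 1] with n hn
      have hn' : (0:ℝ) < n := by exact_mod_cast Nat.pos_of_ne_zero (by omega)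
      exact Set.mem_Ioi.2 (by positivity)
  have hmem : ∀ᶠ n in atTop, z ∈ closedBall
      ((fun n : ℕ => (((⌊(n:ℝ)*z.1⌋:ℝ)+2⁻¹)/(n:ℝ), ((⌊(n:ℝ)*z.2⌋:ℝ)+2⁻¹)/(n:ℝ))) n)
      (1 * (1/(2*(n:ℝ)))) := by
    filter_upwards [eventually_ge_atTop 1] with n hn
    have hn' : (0:ℝ) < n := by exact_mod_cast Nat.pos_of_ne_zero (by omega)
    obtain ⟨h10, h11, h12, h13⟩ := floor_block_aux hx0 hx1 hn
    obtain ⟨h20, h21, h22, h23⟩ := floor_block_aux hy0 hy1 hn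
    have e1 : ((⌊(n:ℝ)*z.1⌋:ℝ)+2⁻¹)/(n:ℝ) - 1/(2*(n:ℝ)) = (⌊(n:ℝ)*z.1⌋:ℝ)/n := by
      field_simp; ring
    have e2 : ((⌊(n:ℝ)*z.1⌋:ℝ)+2⁻¹)/(n:ℝ) + 1/(2*(n:ℝ)) = ((⌊(n:ℝ)*z.1⌋:ℝ)+1)/n := by
      field_simp; ring
    have e3 : ((⌊(n:ℝ)*z.2⌋:ℝ)+2⁻¹)/(n:ℝ) - 1/(2*(n:ℝ)) = (⌊(n:ℝ)*z.2⌋:ℝ)/n := by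
      field_simp; ring
    have e4 : ((⌊(n:ℝ)*z.2⌋:ℝ)+2⁻¹)/(n:ℝ) + 1/(2*(n:ℝ)) = ((⌊(n:ℝ)*z.2⌋:ℝ)+1)/n := by
      field_simp; ring
    rw [mem_closedBall, Prod.dist_eq, one_mul]
    dsimp only
    apply max_le <;>
    · rw [Real.dist_eq, abs_le]
      constructor
      · linarith
      · linarith
  have hz' := hz (fun n : ℕ => (((⌊(n:ℝ)*z.1⌋:ℝ)+2⁻¹)/(n:ℝ), ((⌊(n:ℝ)*z.2⌋:ℝ)+2⁻¹)/(n:ℝ)))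
    (fun n : ℕ => 1/(2*(n:ℝ))) hδlim hmem
  rw [Set.indicator_of_mem hzQ] at hz'
  refine Tendsto.congr' ?_ hz'
  filter_upwards [eventually_ge_atTop 1] with n hn
  have hn' : (0:ℝ) < n := by exact_mod_cast Nat.pos_of_ne_zero (by omega)
  obtain ⟨h10, h11, h12, h13⟩ := floor_block_aux hx0 hx1 hn
  obtain ⟨h20, h21, h22, h23⟩ := floor_block_aux hy0 hy1 hn
  show ⨍ y in closedBall ((((⌊(n:ℝ)*z.1⌋:ℝ)+2⁻¹)/(n:ℝ), ((⌊(n:ℝ)*z.2⌋:ℝ)+2⁻¹)/(n:ℝ)))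
      (1/(2*(n:ℝ))), (Set.Icc (0:ℝ) 1 ×ˢ Set.Icc (0:ℝ) 1).indicator W y = gridAvg n W z
  have hIcc : closedBall ((((⌊(n:ℝ)*z.1⌋:ℝ)+2⁻¹)/(n:ℝ), ((⌊(n:ℝ)*z.2⌋:ℝ)+2⁻¹)/(n:ℝ)))
      (1/(2*(n:ℝ))) =
      Set.Icc ((⌊(n:ℝ)*z.1⌋:ℝ)/n) (((⌊(n:ℝ)*z.1⌋:ℝ)+1)/n) ×ˢ
      Set.Icc ((⌊(n:ℝ)*z.2⌋:ℝ)/n) (((⌊(n:ℝ)*z.2⌋:ℝ)+1)/n) := by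
    rw [← closedBall_prod_same, Real.closedBall_eq_Icc, Real.closedBall_eq_Icc]
    rw [show ((⌊(n:ℝ)*z.1⌋:ℝ)+2⁻¹)/(n:ℝ) - 1/(2*(n:ℝ)) = (⌊(n:ℝ)*z.1⌋:ℝ)/n by field_simp; ring,
        show ((⌊(n:ℝ)*z.1⌋:ℝ)+2⁻¹)/(n:ℝ) + 1/(2*(n:ℝ)) = ((⌊(n:ℝ)*z.1⌋:ℝ)+1)/n by field_simp; ring,
        show ((⌊(n:ℝ)*z.2⌋:ℝ)+2⁻¹)/(n:ℝ) - 1/(2*(n:ℝ)) = (⌊(n:ℝ)*z.2⌋:ℝ)/n by field_simp; ring,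
        show ((⌊(n:ℝ)*z.2⌋:ℝ)+2⁻¹)/(n:ℝ) + 1/(2*(n:ℝ)) = ((⌊(n:ℝ)*z.2⌋:ℝ)+1)/n by field_simp; ring]
  rw [setAverage_eq, hIcc]
  have hvol : volume (Set.Icc ((⌊(n:ℝ)*z.1⌋:ℝ)/n) (((⌊(n:ℝ)*z.1⌋:ℝ)+1)/n) ×ˢ
      Set.Icc ((⌊(n:ℝ)*z.2⌋:ℝ)/n) (((⌊(n:ℝ)*z.2⌋:ℝ)+1)/n)) =
      ENNReal.ofReal (1/(n:ℝ)) * ENNReal.ofReal (1/(n:ℝ)) := by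
    rw [Measure.volume_eq_prod, Measure.prod_prod, Real.volume_Icc, Real.volume_Icc]
    rw [show ((⌊(n:ℝ)*z.1⌋:ℝ)+1)/n - (⌊(n:ℝ)*z.1⌋:ℝ)/n = 1/(n:ℝ) by field_simp; ring,
        show ((⌊(n:ℝ)*z.2⌋:ℝ)+1)/n - (⌊(n:ℝ)*z.2⌋:ℝ)/n = 1/(n:ℝ) by field_simp; ring]
  have hint : ∫ p in Set.Icc ((⌊(n:ℝ)*z.1⌋:ℝ)/n) (((⌊(n:ℝ)*z.1⌋:ℝ)+1)/n) ×ˢ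
      Set.Icc ((⌊(n:ℝ)*z.2⌋:ℝ)/n) (((⌊(n:ℝ)*z.2⌋:ℝ)+1)/n),
      (Set.Icc (0:ℝ) 1 ×ˢ Set.Icc (0:ℝ) 1).indicator W p =
      ∫ p in Set.Ico ((⌊(n:ℝ)*z.1⌋:ℝ)/n) (((⌊(n:ℝ)*z.1⌋:ℝ)+1)/n) ×ˢ
      Set.Ico ((⌊(n:ℝ)*z.2⌋:ℝ)/n) (((⌊(n:ℝ)*z.2⌋:ℝ)+1)/n), W p := by
    rw [setIntegral_congr_set (prod_Icc_ae_eq_Ico _ _ _ _)]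
    apply setIntegral_congr_fun (measurableSet_Ico.prod measurableSet_Ico)
    intro p hp
    apply Set.indicator_of_mem
    constructor
    · exact ⟨le_trans (div_nonneg h10 hn'.le) hp.1.1,
        hp.1.2.le.trans ((div_le_one hn').2 h11)⟩
    · exact ⟨le_trans (div_nonneg h20 hn'.le) hp.2.1,
        hp.2.2.le.trans ((div_le_one hn').2 h21)⟩
  rw [measureReal_def, hvol, hint, gridAvg, smul_eq_mul]
  congr 1
  rw [ENNReal.toReal_mul, ENNReal.toReal_ofReal (by positivity)]
  rw [mul_inv, one_div, inv_inv]
  ring
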